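/- Let G be a (not necessarily finitely generated) subgroup of germs of holomorphic diffeomorphisms at 0 ∈ ℂᵏ and suppose there is ℓ ∈ ℕ such that for every x sufficiently close to 0, the pseudo-orbit of x under G is periodic of order ≤ ℓ. Then G is finite. -/

import Mathlib

open Filter MeasureTheory Set Function

/-- The germ at `0 ∈ ℂᵏ` of a map `ℂᵏ → ℂᵏ`. -/
noncomputable def germ0 (k : ℕ) (f : (Fin k → ℂ) → (Fin k → ℂ)) :
    Filter.Germ (nhds (0 : Fin k → ℂ)) (Fin k → ℂ) :=
  Filter.Germ.ofFun f

/-- `g` is the germ at `0` of a holomorphic diffeomorphism of `(ℂᵏ, 0)`,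
i.e. of a biholomorphism between neighborhoods of `0` fixing `0`. -/
def IsHolDiffGerm (k : ℕ) (g : Filter.Germ (nhds (0 : Fin k → ℂ)) (Fin k → ℂ)) : Prop :=
  ∃ f finv : (Fin k → ℂ) → (Fin k → ℂ),
    g = germ0 k f ∧ AnalyticAt ℂ f 0 ∧ f 0 = 0 ∧ AnalyticAt ℂ finv 0 ∧ finv 0 = 0 ∧
    (∀ᶠ x in nhds (0 : Fin k → ℂ), finv (f x) = x) ∧
    (∀ᶠ x in nhds (0 : Fin k → ℂ), f (finv x) = x)

/-- `S` is a subgroup of the group `Diff(ℂᵏ,0)` of germs at `0` of holomorphic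
diffeomorphisms fixing `0`: it consists of such germs, contains the identity germ,
and is closed under composition and inversion. -/
structure IsGermDiffSubgroup (k : ℕ)
    (S : Set (Filter.Germ (nhds (0 : Fin k → ℂ)) (Fin k → ℂ))) : Prop where
  id_mem : germ0 k id ∈ S
  holo : ∀ g ∈ S, IsHolDiffGerm k g
  comp_mem : ∀ f g : (Fin k → ℂ) → (Fin k → ℂ),
    germ0 k f ∈ S → germ0 k g ∈ S → germ0 k (f ∘ g) ∈ S
  inv_mem : ∀ f finv : (Fin k → ℂ) → (Fin k → ℂ), germ0 k f ∈ S →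
    (∀ᶠ x in nhds (0 : Fin k → ℂ), finv (f x) = x) →
    (∀ᶠ x in nhds (0 : Fin k → ℂ), f (finv x) = x) → germ0 k finv ∈ S


section AuxBurnside

open Polynomial Matrix

lemma charpoly_root_pow_eq_one {k n : ℕ} {M : Matrix (Fin k) (Fin k) ℂ}
    (hM : M ^ n = 1) {lam : ℂ} (h : M.charpoly.IsRoot lam) : lam ^ n = 1 := by
  have hdet : (Matrix.scalar (Fin k) lam - M).det = 0 := by
    have h1 := eval_det (charmatrix M) lam
    rw [← Matrix.charpoly, matPolyEquiv_charmatrix] at h1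
    rw [Polynomial.eval_sub, Polynomial.eval_X, Polynomial.eval_C] at h1
    rw [← h1]; exact h
  obtain ⟨v, hv0, hv⟩ := (Matrix.exists_mulVec_eq_zero_iff).2 hdet
  have hMv : M.mulVec v = lam • v := by
    have h1 : (Matrix.scalar (Fin k) lam).mulVec v - M.mulVec v = 0 := by
      rw [← Matrix.sub_mulVec]; exact hv
    have h2 : (Matrix.scalar (Fin k) lam).mulVec v = lam • v := by
      ext i
      simp [Matrix.scalar, Matrix.mulVec_diagonal, smul_eq_mul]
    rw [h2] at h1
    exact (sub_eq_zero.1 h1).symm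
  have hpow : ∀ j : ℕ, (M ^ j).mulVec v = lam ^ j • v := by
    intro j
    induction j with
    | zero => simp
    | succ j ih =>
      rw [pow_succ', ← Matrix.mulVec_mulVec, ih, Matrix.mulVec_smul, hMv, smul_smul, ← pow_succ]
  have hfin := hpow n
  rw [hM, Matrix.one_mulVec] at hfin
  obtain ⟨i, hi⟩ := Function.ne_iff.1 hv0
  have hvi : v i = (lam ^ n) * v i := by
    have := congrFun hfin i; simpa using this
  have h2 : (lam ^ n - 1) * v i = 0 := by linear_combination -hvi
  rcases mul_eq_zero.1 h2 with h | h
  · linear_combination h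
  · exact absurd h (by simpa using hi)

lemma re_sum_le_card (M : Multiset ℂ) (h : ∀ z ∈ M, ‖z‖ ≤ 1) :
    M.sum.re ≤ M.card := by
  induction M using Multiset.induction with
  | empty => simp
  | cons a M ih =>
    simp only [Multiset.sum_cons, Complex.add_re, Multiset.card_cons]
    have ha : a.re ≤ 1 := le_trans (Complex.re_le_norm a) (h a (Multiset.mem_cons_self a M))
    have hM := ih (fun z hz => h z (Multiset.mem_cons_of_mem hz))
    push_cast
    linarith

lemma eq_one_of_abs_le_one_re_eq_one {a : ℂ} (h1 : ‖a‖ ≤ 1) (h2 : a.re = 1) :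
    a = 1 := by
  have hsq : ‖a‖ ^ 2 ≤ 1 := by nlinarith [norm_nonneg a]
  rw [Complex.sq_norm, Complex.normSq_apply, h2] at hsq
  have him : a.im = 0 := by nlinarith [sq_nonneg a.im]
  exact Complex.ext h2 him

lemma multiset_all_one (M : Multiset ℂ) (h : ∀ z ∈ M, ‖z‖ ≤ 1)
    (hsum : M.sum.re = M.card) : ∀ z ∈ M, z = 1 := by
  induction M using Multiset.induction with
  | empty => simp
  | cons a M ih =>
    have ha : ‖a‖ ≤ 1 := h a (Multiset.mem_cons_self a M)
    have hM : ∀ z ∈ M, ‖z‖ ≤ 1 := fun z hz => h z (Multiset.mem_cons_of_mem hz)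
    have hre : a.re ≤ 1 := le_trans (Complex.re_le_norm a) ha
    have hMre : M.sum.re ≤ M.card := re_sum_le_card M hM
    simp only [Multiset.sum_cons, Complex.add_re, Multiset.card_cons] at hsum
    push_cast at hsum
    have ha1 : a.re = 1 := by linarith
    have hMsum : M.sum.re = M.card := by linarith
    intro z hz
    rcases Multiset.mem_cons.1 hz with rfl | hz'
    · exact eq_one_of_abs_le_one_re_eq_one ha ha1
    · exact ih hM hMsum z hz'

lemma eq_one_of_pow_eq_one_of_trace {k n : ℕ} (hn : 0 < n) {M : Matrix (Fin k) (Fin k) ℂ}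
    (hM : M ^ n = 1) (htr : M.trace = (k : ℂ)) : M = 1 := by
  rcases Nat.eq_zero_or_pos k with rfl | hk
  · ext i j; exact i.elim0
  -- all roots of charpoly are 1
  have hsplit : M.charpoly.Splits := IsAlgClosed.splits M.charpoly
  have hcard : (M.charpoly.roots).card = k := by
    rw [Polynomial.splits_iff_card_roots.1 hsplit, Matrix.charpoly_natDegree_eq_dim,
      Fintype.card_fin]
  have habs : ∀ z ∈ M.charpoly.roots, ‖z‖ ≤ 1 := by
    intro z hz
    have hroot : M.charpoly.IsRoot z := (Polynomial.mem_roots (M.charpoly_monic.ne_zero)).1 hz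
    have hpow := charpoly_root_pow_eq_one hM hroot
    have habs : ‖z‖ ^ n = 1 := by
      rw [← norm_pow, hpow]; simp
    by_contra hgt
    push_neg at hgt
    have : (1 : ℝ) < ‖z‖ ^ n := one_lt_pow₀ hgt hn.ne'
    rw [habs] at this
    exact lt_irrefl 1 this
  have hsumre : (M.charpoly.roots).sum.re = (M.charpoly.roots).card := by
    rw [← Matrix.trace_eq_sum_roots_charpoly, htr, hcard]
    simp
  have hroots1 : ∀ z ∈ M.charpoly.roots, z = 1 := multiset_all_one _ habs hsumre
  -- minpoly divides X^n - 1 and charpoly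
  haveI : Nonempty (Fin k) := ⟨⟨0, hk⟩⟩
  have hint : IsIntegral ℂ M := ⟨M.charpoly, M.charpoly_monic, M.aeval_self_charpoly⟩
  have hdvd1 : minpoly ℂ M ∣ (X ^ n - C 1 : ℂ[X]) := by
    apply minpoly.dvd
    simp only [map_sub, map_pow, aeval_X, aeval_C, hM]
    simp
  have hsep : Squarefree (X ^ n - C 1 : ℂ[X]) :=
    (Polynomial.separable_X_pow_sub_C (1 : ℂ) (Nat.cast_ne_zero.2 hn.ne') one_ne_zero).squarefree
  have hsf : Squarefree (minpoly ℂ M) := hsep.squarefree_of_dvd hdvd1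
  -- roots of minpoly are roots of charpoly, hence 1
  have hmin_roots : ∀ z ∈ (minpoly ℂ M).roots, z = 1 := by
    intro z hz
    have hne : minpoly ℂ M ≠ 0 := minpoly.ne_zero hint
    have hroot : (minpoly ℂ M).IsRoot z := (Polynomial.mem_roots hne).1 hz
    apply hroots1
    rw [Polynomial.mem_roots M.charpoly_monic.ne_zero]
    exact hroot.dvd (Matrix.minpoly_dvd_charpoly M)
  have hmono : (minpoly ℂ M).Monic := minpoly.monic hint
  have hminsplit : (minpoly ℂ M).Splits := IsAlgClosed.splits _
  have heq : minpoly ℂ M = (X - C 1) ^ (minpoly ℂ M).roots.card := by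
    conv_lhs => rw [hminsplit.eq_prod_roots_of_monic hmono]
    have hrep : (minpoly ℂ M).roots.map (fun a => X - C a)
        = Multiset.replicate (minpoly ℂ M).roots.card ((X : ℂ[X]) - C 1) := by
      apply Multiset.eq_replicate.2
      refine ⟨Multiset.card_map _ _, ?_⟩
      intro b hb
      obtain ⟨a, ha, rfl⟩ := Multiset.mem_map.1 hb
      rw [hmin_roots a ha]
    rw [hrep, Multiset.prod_replicate]
  have hd1 : (minpoly ℂ M).roots.card = 1 := by
    have hdpos : 0 < (minpoly ℂ M).roots.card := by
      rw [Polynomial.splits_iff_card_roots.1 hminsplit]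
      exact minpoly.natDegree_pos hint
    by_contra hne1
    have h2le : 2 ≤ (minpoly ℂ M).roots.card := by omega
    have : (X - C 1 : ℂ[X]) * (X - C 1) ∣ minpoly ℂ M := by
      rw [heq, ← pow_two]
      exact pow_dvd_pow _ h2le
    exact Polynomial.not_isUnit_X_sub_C 1 (hsf _ this)
  have : minpoly ℂ M = X - C 1 := by rw [heq, hd1, pow_one]
  have haev := minpoly.aeval ℂ M
  rw [this] at haev
  simp only [map_sub, aeval_X, aeval_C] at haev
  rw [sub_eq_zero] at haev
  simpa using haev

lemma finite_sums_of_roots_of_unity (n : ℕ) (hn : 0 < n) (k : ℕ) :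
    {z : ℂ | ∃ M : Multiset ℂ, Multiset.card M = k ∧ (∀ x ∈ M, x ^ n = 1) ∧ M.sum = z}.Finite := by
  have hR : {x : ℂ | x ^ n = 1}.Finite := by
    have hsub : {x : ℂ | x ^ n = 1} ⊆ {x : ℂ | x ∈ ((X : ℂ[X]) ^ n - C 1).roots} := by
      intro x hx
      simp only [Set.mem_setOf_eq] at hx ⊢
      rw [Polynomial.mem_roots (by
        apply Polynomial.Monic.ne_zero
        exact Polynomial.monic_X_pow_sub_C (1 : ℂ) hn.ne')]
      simp [Polynomial.IsRoot, hx]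
    exact Set.Finite.subset (((X : ℂ[X]) ^ n - C 1).roots.finite_toSet) hsub
  induction k with
  | zero =>
    apply Set.Finite.subset (Set.finite_singleton (0 : ℂ))
    rintro z ⟨M, hcard, -, hsum⟩
    rw [Multiset.card_eq_zero.1 hcard] at hsum
    simp [← hsum]
  | succ k ih =>
    apply Set.Finite.subset (Set.Finite.image2 (· + ·) hR ih)
    rintro z ⟨M, hcard, hmem, hsum⟩
    have hpos : 0 < Multiset.card M := by omega
    obtain ⟨a, ha⟩ := Multiset.card_pos_iff_exists_mem.1 hpos
    obtain ⟨M', rfl⟩ := Multiset.exists_cons_of_mem ha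
    refine Set.mem_image2.2 ⟨a, hmem a ha, M'.sum, ⟨M', ?_, ?_, rfl⟩, ?_⟩
    · simpa using hcard
    · exact fun x hx => hmem x (Multiset.mem_cons_of_mem hx)
    · rw [← hsum, Multiset.sum_cons]

lemma burnside_finite {k n : ℕ} (hn : 0 < n) (G : Set (Matrix (Fin k) (Fin k) ℂ))
    (hmul : ∀ A ∈ G, ∀ B ∈ G, A * B ∈ G) (hpow : ∀ A ∈ G, A ^ n = 1) : G.Finite := by
  -- powers stay in G
  have hpowmem : ∀ B ∈ G, ∀ j : ℕ, 0 < j → B ^ j ∈ G := by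
    intro B hB j hj
    induction j with
    | zero => omega
    | succ j ih =>
      rcases Nat.eq_zero_or_pos j with rfl | hj'
      · simpa using hB
      · rw [pow_succ]; exact hmul _ (ih hj') _ hB
  rcases eq_or_lt_of_le (show 1 ≤ n from hn) with h1 | h2
  · -- n = 1 : G ⊆ {1}
    apply Set.Finite.subset (Set.finite_singleton 1)
    intro A hA
    have := hpow A hA
    rw [← h1, pow_one] at this
    simpa using this
  -- n ≥ 2
  set m := n - 1 with hm
  have hmpos : 0 < m := by omega
  have hmn : m + 1 = n := by omega
  -- trace values set
  set T := {z : ℂ | ∃ M : Multiset ℂ, Multiset.card M = k ∧ (∀ x ∈ M, x ^ n = 1) ∧ M.sum = z}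
    with hT
  have hTfin : T.Finite := finite_sums_of_roots_of_unity n hn k
  have htrace_mem : ∀ A ∈ G, A.trace ∈ T := by
    intro A hA
    refine ⟨A.charpoly.roots, ?_, ?_, (Matrix.trace_eq_sum_roots_charpoly A).symm⟩
    · rw [Polynomial.splits_iff_card_roots.1 (IsAlgClosed.splits A.charpoly),
        Matrix.charpoly_natDegree_eq_dim, Fintype.card_fin]
    · intro x hx
      exact charpoly_root_pow_eq_one (hpow A hA)
        ((Polynomial.mem_roots A.charpoly_monic.ne_zero).1 hx)
  -- spanning finite subset
  obtain ⟨b, hbG, hbspan, hbli⟩ := exists_linearIndependent ℂ G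
  have hbfin : b.Finite := hbli.setFinite
  haveI : Finite b := hbfin.to_subtype
  -- injective map into finite set
  set F : Matrix (Fin k) (Fin k) ℂ → (b → ℂ) := fun A x => (A * (x : Matrix (Fin k) (Fin k) ℂ)).trace
    with hF
  have himg : (F '' G) ⊆ Set.pi Set.univ (fun _ : b => T) := by
    rintro _ ⟨A, hA, rfl⟩
    rw [Set.mem_pi]
    intro x _
    exact htrace_mem _ (hmul A hA x (hbG x.2))
  have hinj : Set.InjOn F G := by
    intro A hA B hB hFeq
    -- the linear functional X ↦ trace ((A - B) * X) vanishes on span b = span G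
    set φ : Matrix (Fin k) (Fin k) ℂ →ₗ[ℂ] ℂ :=
      (Matrix.traceLinearMap (Fin k) ℂ ℂ).comp (LinearMap.mulLeft ℂ (A - B)) with hφ
    have hφb : ∀ x ∈ b, φ x = 0 := by
      intro x hx
      have := congrFun hFeq ⟨x, hx⟩
      simp only [hF] at this
      simp only [hφ, LinearMap.comp_apply, LinearMap.mulLeft_apply, Matrix.traceLinearMap_apply,
        sub_mul, Matrix.trace_sub, this]
      ring
    have hker : Submodule.span ℂ G ≤ LinearMap.ker φ := by
      rw [← hbspan, Submodule.span_le]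
      intro x hx
      exact hφb x hx
    have hBm : B ^ m ∈ G := hpowmem B hB m hmpos
    have hφBm : φ (B ^ m) = 0 := hker (Submodule.subset_span hBm)
    have htr : (A * B ^ m).trace = (k : ℂ) := by
      have h1 : ((A - B) * B ^ m).trace = 0 := hφBm
      rw [sub_mul, Matrix.trace_sub] at h1
      have h2 : B * B ^ m = 1 := by
        rw [← pow_succ', hmn]; exact hpow B hB
      have h3 : (B * B ^ m).trace = (k : ℂ) := by
        rw [h2, Matrix.trace_one]; simp
      rw [sub_eq_zero] at h1
      rw [h1, h3]
    have hABm : A * B ^ m ∈ G := hmul A hA _ hBm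
    have hone : A * B ^ m = 1 := eq_one_of_pow_eq_one_of_trace hn (hpow _ hABm) htr
    calc A = A * (B ^ m * B) := by rw [← pow_succ, hmn, hpow B hB, mul_one]
    _ = (A * B ^ m) * B := by rw [mul_assoc]
    _ = B := by rw [hone, one_mul]
  exact Set.Finite.of_finite_image
    (Set.Finite.subset (Set.Finite.pi (fun _ => hTfin)) himg) hinj

end AuxBurnside

section AuxGerm

lemma germ0_eq_iff {k : ℕ} {f g : (Fin k → ℂ) → (Fin k → ℂ)} :
    germ0 k f = germ0 k g ↔ f =ᶠ[nhds (0 : Fin k → ℂ)] g :=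
  Filter.Germ.coe_eq

lemma iterate_analytic_fderiv {k : ℕ} {f : (Fin k → ℂ) → (Fin k → ℂ)}
    (hf : AnalyticAt ℂ f 0) (h0 : f 0 = 0) :
    ∀ j : ℕ, AnalyticAt ℂ (f^[j]) 0 ∧ f^[j] 0 = 0 ∧
      fderiv ℂ (f^[j]) 0 = (fderiv ℂ f 0) ^ j := by
  intro j
  induction j with
  | zero =>
    refine ⟨by simpa using analyticAt_id, by simp, ?_⟩
    simp only [Function.iterate_zero, pow_zero, ContinuousLinearMap.one_def]
    exact fderiv_id
  | succ j ih =>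
    obtain ⟨ha, h00, hD⟩ := ih
    have hfa : AnalyticAt ℂ f (f^[j] 0) := by rw [h00]; exact hf
    rw [Function.iterate_succ']
    refine ⟨hfa.comp ha, by simp [h00, h0], ?_⟩
    rw [fderiv_comp 0 hfa.differentiableAt ha.differentiableAt, h00, hD, pow_succ',
      ContinuousLinearMap.mul_def]

lemma eventually_id_of_fderiv_id {k n : ℕ} (hn : 0 < n) {f : (Fin k → ℂ) → (Fin k → ℂ)}
    (hf : AnalyticAt ℂ f 0) (h0 : f 0 = 0) (hD : fderiv ℂ f 0 = 1)
    (hper : ∀ᶠ x in nhds (0 : Fin k → ℂ), f^[n] x = x) :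
    f =ᶠ[nhds (0 : Fin k → ℂ)] id := by
  set h : (Fin k → ℂ) → (Fin k → ℂ) :=
    fun x => (n : ℂ)⁻¹ • ∑ j ∈ Finset.range n, f^[j] x with hh
  have hiter := iterate_analytic_fderiv hf h0
  have hsum_an : AnalyticAt ℂ (fun x => ∑ j ∈ Finset.range n, f^[j] x) 0 :=
    Finset.analyticAt_fun_sum _ (fun j _ => (hiter j).1)
  have hha : AnalyticAt ℂ h 0 := analyticAt_const.fun_smul hsum_an
  have hhD : fderiv ℂ h 0 = 1 := by
    rw [hh]
    rw [fderiv_fun_const_smul hsum_an.differentiableAt]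
    rw [fderiv_fun_sum (fun j _ => (hiter j).1.differentiableAt)]
    have : ∀ j ∈ Finset.range n, fderiv ℂ (f^[j]) 0 = 1 := by
      intro j _
      rw [(hiter j).2.2, hD, one_pow]
    rw [Finset.sum_congr rfl this, Finset.sum_const, Finset.card_range]
    rw [← Nat.cast_smul_eq_nsmul ℂ, smul_smul, inv_mul_cancel₀ (by exact_mod_cast hn.ne'), one_smul]
  have hstrict : HasStrictFDerivAt h
      ((ContinuousLinearEquiv.refl ℂ (Fin k → ℂ) :
        (Fin k → ℂ) ≃L[ℂ] (Fin k → ℂ)) : (Fin k → ℂ) →L[ℂ] (Fin k → ℂ)) 0 := by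
    have := hha.contDiffAt (n := 1).hasStrictFDerivAt one_ne_zero
    rwa [hhD, ContinuousLinearMap.one_def, ← ContinuousLinearEquiv.coe_refl] at this
  set linv := hstrict.localInverse h _ 0 with hlinv
  have hleft : ∀ᶠ x in nhds (0 : Fin k → ℂ), linv (h x) = x := hstrict.eventually_left_inverse
  have hcont : Filter.Tendsto f (nhds 0) (nhds 0) := by
    have := hf.continuousAt
    rwa [ContinuousAt, h0] at this
  have h2 : ∀ᶠ x in nhds (0 : Fin k → ℂ), linv (h (f x)) = f x := hcont.eventually hleft
  have h3 : ∀ᶠ x in nhds (0 : Fin k → ℂ), h (f x) = h x := by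
    filter_upwards [hper] with x hx
    simp only [hh]
    congr 1
    have hterm : ∀ j ∈ Finset.range n, f^[j] (f x) = f^[j + 1] x := by
      intro j _
      exact (Function.iterate_succ_apply f j x).symm
    rw [Finset.sum_congr rfl hterm]
    have key : (∑ j ∈ Finset.range n, f^[j + 1] x) + f^[0] x
        = (∑ j ∈ Finset.range n, f^[j] x) + f^[n] x := by
      rw [← Finset.sum_range_succ' (fun j => f^[j] x) n, ← Finset.sum_range_succ (fun j => f^[j] x) n]
    simp only [Function.iterate_zero, id_eq, hx] at key
    exact add_right_cancel key
  filter_upwards [hleft, h2, h3] with x e1 e2 e3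
  show f x = x
  calc f x = linv (h (f x)) := e2.symm
  _ = linv (h x) := by rw [e3]
  _ = x := e1

noncomputable def matOf {k : ℕ} (f : (Fin k → ℂ) → (Fin k → ℂ)) : Matrix (Fin k) (Fin k) ℂ :=
  LinearMap.toMatrixAlgEquiv' ((fderiv ℂ f 0).toLinearMap)

lemma matOf_congr {k : ℕ} {f g : (Fin k → ℂ) → (Fin k → ℂ)} (h : f =ᶠ[nhds 0] g) :
    matOf f = matOf g := by
  unfold matOf
  rw [h.fderiv_eq]

lemma matOf_inj {k : ℕ} {f g : (Fin k → ℂ) → (Fin k → ℂ)} (h : matOf f = matOf g) :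
    fderiv ℂ f 0 = fderiv ℂ g 0 := by
  unfold matOf at h
  have := LinearMap.toMatrixAlgEquiv'.injective h
  exact ContinuousLinearMap.coe_injective this

lemma matOf_id {k : ℕ} : matOf (id : (Fin k → ℂ) → (Fin k → ℂ)) = 1 := by
  unfold matOf
  rw [fderiv_id]
  simp [ContinuousLinearMap.coe_id]

lemma matOf_comp {k : ℕ} {f g : (Fin k → ℂ) → (Fin k → ℂ)}
    (hf : AnalyticAt ℂ f 0) (hg : AnalyticAt ℂ g 0) (hg0 : g 0 = 0) :
    matOf (f ∘ g) = matOf f * matOf g := by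
  unfold matOf
  have hfg : AnalyticAt ℂ f (g 0) := by rw [hg0]; exact hf
  rw [fderiv_comp 0 hfg.differentiableAt hg.differentiableAt, hg0,
    ContinuousLinearMap.toLinearMap_comp, ← Module.End.mul_eq_comp, map_mul]

lemma matOf_iterate {k : ℕ} {f : (Fin k → ℂ) → (Fin k → ℂ)}
    (hf : AnalyticAt ℂ f 0) (h0 : f 0 = 0) (j : ℕ) :
    matOf (f^[j]) = matOf f ^ j := by
  induction j with
  | zero => simpa using matOf_id
  | succ j ih =>
    rw [Function.iterate_succ', matOf_comp hf (iterate_analytic_fderiv hf h0 j).1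
      (iterate_analytic_fderiv hf h0 j).2.1, ih, pow_succ']

noncomputable def Dg {k : ℕ} (g : Filter.Germ (nhds (0 : Fin k → ℂ)) (Fin k → ℂ)) :
    Matrix (Fin k) (Fin k) ℂ :=
  matOf (Quotient.out g)

lemma germ0_out {k : ℕ} (g : Filter.Germ (nhds (0 : Fin k → ℂ)) (Fin k → ℂ)) :
    germ0 k (Quotient.out g) = g := by
  rw [germ0, Filter.Germ.ofFun]
  exact Quotient.out_eq' g

lemma Dg_germ0 {k : ℕ} (f : (Fin k → ℂ) → (Fin k → ℂ)) : Dg (germ0 k f) = matOf f := by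
  apply matOf_congr
  rw [← germ0_eq_iff, germ0_out]

end AuxGerm

/-- A (not necessarily finitely generated) subgroup of germs of holomorphic
diffeomorphisms at `0 ∈ ℂᵏ` such that every point sufficiently close to `0` is
periodic of uniformly bounded order `≤ ℓ` for every element, is finite. -/
theorem finite_of_germDiffSubgroup_unifBounded_periodic_orbits (k ℓ : ℕ) (hℓ : 1 ≤ ℓ)
    (S : Set (Filter.Germ (nhds (0 : Fin k → ℂ)) (Fin k → ℂ)))
    (hS : IsGermDiffSubgroup k S)
    (hper : ∀ f : (Fin k → ℂ) → (Fin k → ℂ), germ0 k f ∈ S →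
      ∀ᶠ x in nhds (0 : Fin k → ℂ), ∃ m, 1 ≤ m ∧ m ≤ ℓ ∧ f^[m] x = x) :
    S.Finite := by
  classical
  set n := Nat.factorial ℓ with hn
  have hnpos : 0 < n := Nat.factorial_pos ℓ
  have hfix : ∀ f : (Fin k → ℂ) → (Fin k → ℂ), germ0 k f ∈ S →
      ∀ᶠ x in nhds (0 : Fin k → ℂ), f^[n] x = x := by
    intro f hf
    filter_upwards [hper f hf] with x hx
    obtain ⟨m, hm1, hmℓ, hfx⟩ := hx
    obtain ⟨q, hq⟩ : m ∣ n := Nat.dvd_factorial hm1 hmℓ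
    rw [hq, Function.iterate_mul]
    exact Function.iterate_fixed hfx q
  have hpowG : ∀ A ∈ Dg '' S, A ^ n = 1 := by
    rintro _ ⟨g, hg, rfl⟩
    obtain ⟨f, finv, hgf, hfa, hf0, hia, hi0, hl, hr⟩ := hS.holo g hg
    have hidev : f^[n] =ᶠ[nhds (0 : Fin k → ℂ)] id := hfix f (hgf ▸ hg)
    rw [hgf, Dg_germ0, ← matOf_iterate hfa hf0, matOf_congr hidev, matOf_id]
  have hmulG : ∀ A ∈ Dg '' S, ∀ B ∈ Dg '' S, A * B ∈ Dg '' S := by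
    rintro _ ⟨g1, hg1, rfl⟩ _ ⟨g2, hg2, rfl⟩
    obtain ⟨f1, finv1, hgf1, hf1a, hf10, -, -, -, -⟩ := hS.holo g1 hg1
    obtain ⟨f2, finv2, hgf2, hf2a, hf20, -, -, -, -⟩ := hS.holo g2 hg2
    refine ⟨germ0 k (f1 ∘ f2), hS.comp_mem f1 f2 (hgf1 ▸ hg1) (hgf2 ▸ hg2), ?_⟩
    rw [Dg_germ0, matOf_comp hf1a hf2a hf20, hgf1, hgf2, Dg_germ0, Dg_germ0]
  have hinj : Set.InjOn Dg S := by
    intro g1 hg1 g2 hg2 hD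
    obtain ⟨f1, finv1, hgf1, hf1a, hf10, hi1a, hi10, hl1, hr1⟩ := hS.holo g1 hg1
    obtain ⟨f2, finv2, hgf2, hf2a, hf20, hi2a, hi20, hl2, hr2⟩ := hS.holo g2 hg2
    have hφS : germ0 k (finv2 ∘ f1) ∈ S :=
      hS.comp_mem _ _ (hS.inv_mem f2 finv2 (hgf2 ▸ hg2) hl2 hr2) (hgf1 ▸ hg1)
    have hi2a' : AnalyticAt ℂ finv2 (f1 0) := by rw [hf10]; exact hi2a
    have hφa : AnalyticAt ℂ (finv2 ∘ f1) 0 := hi2a'.comp hf1a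
    have hφ0 : (finv2 ∘ f1) 0 = 0 := by simp [Function.comp, hf10, hi20]
    have hD21 : fderiv ℂ f1 0 = fderiv ℂ f2 0 := by
      rw [hgf1, hgf2, Dg_germ0, Dg_germ0] at hD
      exact matOf_inj hD
    have hi2a'' : AnalyticAt ℂ finv2 (f2 0) := by rw [hf20]; exact hi2a
    have hDcomp : (fderiv ℂ finv2 0).comp (fderiv ℂ f2 0) =
        ContinuousLinearMap.id ℂ (Fin k → ℂ) := by
      have hev : (finv2 ∘ f2) =ᶠ[nhds (0 : Fin k → ℂ)] id := hl2
      have heq := hev.fderiv_eq (𝕜 := ℂ)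
      rw [fderiv_comp 0 hi2a''.differentiableAt hf2a.differentiableAt, hf20, fderiv_id] at heq
      exact heq
    have hφD : fderiv ℂ (finv2 ∘ f1) 0 = 1 := by
      rw [fderiv_comp 0 hi2a'.differentiableAt hf1a.differentiableAt, hf10, hD21,
        ContinuousLinearMap.one_def]
      exact hDcomp
    have hφid : (finv2 ∘ f1) =ᶠ[nhds (0 : Fin k → ℂ)] id :=
      eventually_id_of_fderiv_id hnpos hφa hφ0 hφD (hfix _ hφS)
    have hcont1 : Filter.Tendsto f1 (nhds 0) (nhds 0) := by
      have := hf1a.continuousAt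
      rwa [ContinuousAt, hf10] at this
    have h4 : ∀ᶠ x in nhds (0 : Fin k → ℂ), f2 (finv2 (f1 x)) = f1 x := hcont1.eventually hr2
    rw [hgf1, hgf2, germ0_eq_iff]
    filter_upwards [hφid, h4] with x e1 e2
    have e1' : finv2 (f1 x) = x := e1
    rw [← e2, e1']
  have hGfin := burnside_finite hnpos (Dg '' S) hmulG hpowG
  exact Set.Finite.of_finite_image hGfin hinj
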